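/- Let K be a commutative ring, n ≥ 1, a : Fin n → K × K, and for I ⊆ {1,…,n} define x(I) = ∏_{i∈I} (a_i)₂ · ∏_{i∉I} (a_i)₁. Fix I ⊆ {1,…,n} with |I| ≥ 2 and let P be any finite set of set partitions of I, partially ordered by refinement, which contains both the partition of I into singletons and the one-block partition {I}; let μ_P be the Möbius function of the poset P. Then ∑_{π ∈ P} μ_P(π, ⊤) · x(∅)^{n−|π|} · ∏_{B∈π} x(B) = 0, where ⊤ = {I} is the greatest element of P and |π| is the number of blocks of π. -/

import Mathlib

open scoped Classical in
/-- Möbius inversion key lemma: left inverse of zeta. -/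
theorem mob_key {A : Type*} [PartialOrder A] [DecidableEq A] (P : Finset A)
    (μ : A → A → ℤ)
    (hrefl : ∀ π ∈ P, μ π π = 1)
    (hnle : ∀ π ∈ P, ∀ ν ∈ P, ¬ π ≤ ν → μ π ν = 0)
    (hrec : ∀ π ∈ P, ∀ ν ∈ P, π < ν →
      μ π ν = -∑ σ ∈ P.filter (fun σ => π ≤ σ ∧ σ < ν), μ π σ) :
    ∀ π ∈ P, ∀ ν ∈ P, ∑ σ ∈ P.filter (fun σ => σ ≤ ν), μ π σ
      = if π = ν then 1 else 0 := by
  intro π hπ ν hν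
  by_cases hle : π ≤ ν
  · have hstep : ∑ σ ∈ P.filter (fun σ => σ ≤ ν), μ π σ
        = ∑ σ ∈ P.filter (fun σ => π ≤ σ ∧ σ ≤ ν), μ π σ := by
      refine (Finset.sum_subset ?_ ?_).symm
      · intro σ hσ
        simp only [Finset.mem_filter] at hσ ⊢
        exact ⟨hσ.1, hσ.2.2⟩
      · intro σ hσ hσ'
        simp only [Finset.mem_filter] at hσ hσ'
        exact hnle π hπ σ hσ.1 (fun h => hσ' ⟨hσ.1, h, hσ.2⟩)
    rcases eq_or_lt_of_le hle with heq | hlt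
    · subst heq
      rw [if_pos rfl, hstep]
      have : P.filter (fun σ => π ≤ σ ∧ σ ≤ π) = {π} := by
        ext σ
        simp only [Finset.mem_filter, Finset.mem_singleton]
        constructor
        · rintro ⟨_, h1, h2⟩; exact le_antisymm h2 h1
        · rintro rfl; exact ⟨hπ, le_rfl, le_rfl⟩
      rw [this, Finset.sum_singleton, hrefl π hπ]
    · rw [if_neg (ne_of_lt hlt), hstep]
      have hsplit : P.filter (fun σ => π ≤ σ ∧ σ ≤ ν)
          = insert ν (P.filter (fun σ => π ≤ σ ∧ σ < ν)) := by
        ext σ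
        simp only [Finset.mem_filter, Finset.mem_insert]
        constructor
        · rintro ⟨h1, h2, h3⟩
          rcases eq_or_lt_of_le h3 with h | h
          · exact Or.inl h
          · exact Or.inr ⟨h1, h2, h⟩
        · rintro (rfl | ⟨h1, h2, h3⟩)
          · exact ⟨hν, hle, le_rfl⟩
          · exact ⟨h1, h2, le_of_lt h3⟩
      rw [hsplit, Finset.sum_insert (by simp), hrec π hπ ν hν hlt]
      ring
  · rw [if_neg (fun h => hle (le_of_eq h))]
    refine Finset.sum_eq_zero fun σ hσ => ?_
    simp only [Finset.mem_filter] at hσ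
    exact hnle π hπ σ hσ.1 (fun h => hle (h.trans hσ.2))

open scoped Classical in
/-- Dual Möbius identity: the columns of μ against the bottom element sum to zero. -/
theorem mob_sum_eq_zero {A : Type*} [PartialOrder A] [DecidableEq A] (P : Finset A)
    (b t : A) (hbP : b ∈ P) (htP : t ∈ P) (hbt : b ≠ t) (hb : ∀ π ∈ P, b ≤ π)
    (μ : A → A → ℤ)
    (hrefl : ∀ π ∈ P, μ π π = 1)
    (hnle : ∀ π ∈ P, ∀ ν ∈ P, ¬ π ≤ ν → μ π ν = 0)
    (hrec : ∀ π ∈ P, ∀ ν ∈ P, π < ν →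
      μ π ν = -∑ σ ∈ P.filter (fun σ => π ≤ σ ∧ σ < ν), μ π σ) :
    ∑ π ∈ P, μ π t = 0 := by
  classical
  set M : Matrix P P ℤ := fun π ν => μ π.1 ν.1 with hM
  set Z : Matrix P P ℤ := fun π ν => if π.1 ≤ ν.1 then 1 else 0 with hZ
  have hMZ : M * Z = 1 := by
    ext π ν
    rw [Matrix.mul_apply, Matrix.one_apply]
    have : ∀ σ : P, M π σ * Z σ ν = if σ.1 ≤ ν.1 then μ π.1 σ.1 else 0 := by
      intro σ
      simp only [hM, hZ]
      split <;> simp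
    rw [Finset.sum_congr rfl (fun σ _ => this σ)]
    rw [Finset.sum_coe_sort P (fun σ => if σ ≤ ν.1 then μ π.1 σ else 0), ← Finset.sum_filter]
    rw [mob_key P μ hrefl hnle hrec π.1 π.2 ν.1 ν.2]
    exact if_congr Subtype.ext_iff.symm rfl rfl
  have hZM : Z * M = 1 := mul_eq_one_comm.mp hMZ
  have := congrFun (congrFun hZM ⟨b, hbP⟩) ⟨t, htP⟩
  rw [Matrix.mul_apply, Matrix.one_apply] at this
  rw [if_neg (by simp [Subtype.ext_iff]; exact hbt)] at this
  have h2 : ∀ σ : P, Z ⟨b, hbP⟩ σ * M σ ⟨t, htP⟩ = μ σ.1 t := by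
    intro σ
    simp only [hZ, hM]
    rw [if_pos (hb σ.1 σ.2), one_mul]
  rw [Finset.sum_congr rfl (fun σ _ => h2 σ)] at this
  rw [Finset.sum_coe_sort P (fun σ => μ σ t)] at this
  exact this

open scoped Classical in
/-- Let `K` be a commutative ring, `n ≥ 1`, `a : Fin n → K × K`, and for
`I ⊆ [n]` let `x(I) = ∏_{i∈I} (a i).2 · ∏_{i∉I} (a i).1`.  Fix `I` with `|I| ≥ 2` and let
`P` be a finite set of set partitions of `I` (ordered by refinement) containing the
partition into singletons (`⊥`) and the one-block partition (`⊤`); let `μ` be the Möbius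
function of the poset `P` (characterized by its recursion).  Then
`∑_{π ∈ P} μ(π,⊤)·x(∅)^{n−|π|}·∏_{B∈π} x(B) = 0`. -/
theorem L_cumulant_cremona_linearizes_segre {K : Type*} [CommRing K] {n : ℕ} (hn : 1 ≤ n)
    (a : Fin n → K × K)
    (x : Finset (Fin n) → K)
    (hx : ∀ I : Finset (Fin n), x I = (∏ i ∈ I, (a i).2) * ∏ i ∈ Iᶜ, (a i).1)
    (I : Finset (Fin n)) (hI : 2 ≤ I.card)
    (P : Finset (Finpartition I))
    (hbot : (⊥ : Finpartition I) ∈ P) (htop : (⊤ : Finpartition I) ∈ P)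
    (μ : Finpartition I → Finpartition I → ℤ)
    (hrefl : ∀ π ∈ P, μ π π = 1)
    (hnle : ∀ π ∈ P, ∀ ν ∈ P, ¬ π ≤ ν → μ π ν = 0)
    (hrec : ∀ π ∈ P, ∀ ν ∈ P, π < ν →
      μ π ν = -∑ σ ∈ P.filter (fun σ => π ≤ σ ∧ σ < ν), μ π σ) :
    ∑ π ∈ P, (μ π ⊤ : K) * x ∅ ^ (n - π.parts.card) * ∏ B ∈ π.parts, x B = 0 := by
  classical
  -- I is nonempty, indeed not ⊥
  have hIne : I ≠ ∅ := by
    intro h; rw [h] at hI; simp at hI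
  -- ⊥ ≠ ⊤ in Finpartition I
  have hbt : (⊥ : Finpartition I) ≠ ⊤ := by
    intro h
    have h1 : (⊥ : Finpartition I).parts.card = I.card := Finpartition.card_bot I
    have h2 : (⊤ : Finpartition I).parts ⊆ {I} := Finpartition.parts_top_subset I
    have := Finset.card_le_card h2
    rw [← h, h1, Finset.card_singleton] at this
    omega
  have hsum : ∑ π ∈ P, μ π ⊤ = 0 :=
    mob_sum_eq_zero P ⊥ ⊤ hbot htop hbt (fun π _ => bot_le) μ hrefl hnle hrec
  -- notation
  set f1 : Fin n → K := fun i => (a i).1 with hf1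
  set f2 : Fin n → K := fun i => (a i).2 with hf2
  set Pr : K := ∏ i ∈ I, f1 i with hPr
  set Q : K := ∏ i ∈ Iᶜ, f1 i with hQ
  set T2 : K := ∏ i ∈ I, f2 i with hT2
  have hxe : x ∅ = Pr * Q := by
    rw [hx ∅, Finset.prod_empty, one_mul, Finset.compl_empty, hPr, hQ,
      Finset.prod_mul_prod_compl]
  -- the constant value of each term
  have hterm : ∀ π : Finpartition I,
      x ∅ ^ (n - π.parts.card) * ∏ B ∈ π.parts, x B = T2 * Pr ^ (n-1) * Q ^ n := by
    intro π
    set k := π.parts.card with hk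
    have hk1 : 1 ≤ k :=
      Finset.card_pos.mpr (π.parts_nonempty (by simpa using hIne))
    have hkn : k ≤ n := by
      have h1 : k ≤ I.card := π.card_parts_le_card
      have h2 : I.card ≤ n := by
        have := Finset.card_le_univ I
        simpa using this
      omega
    have hdisj : (π.parts : Set (Finset (Fin n))).PairwiseDisjoint id :=
      π.supIndep.pairwiseDisjoint
    have hcover : π.parts.biUnion id = I := by
      rw [← Finset.sup_eq_biUnion]; exact π.sup_parts
    -- product of f2 over blocks
    have h2p : ∏ B ∈ π.parts, ∏ i ∈ B, f2 i = T2 := by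
      rw [hT2]
      conv_rhs => rw [← hcover]
      exact (Finset.prod_biUnion hdisj).symm
    -- product over complements of blocks
    have h1p : ∏ B ∈ π.parts, ∏ i ∈ Bᶜ, f1 i = Pr ^ (k-1) * Q ^ k := by
      have hsplit : ∀ B ∈ π.parts, ∏ i ∈ Bᶜ, f1 i = (∏ i ∈ I \ B, f1 i) * Q := by
        intro B hB
        have hBI : B ⊆ I := π.le hB
        have hu : (I \ B) ∪ Iᶜ = Bᶜ := by
          ext i
          simp only [Finset.mem_union, Finset.mem_sdiff, Finset.mem_compl]
          constructor
          · rintro (⟨_, h⟩ | h)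
            · exact h
            · exact fun hiB => h (hBI hiB)
          · intro h
            by_cases hi : i ∈ I
            · exact Or.inl ⟨hi, h⟩
            · exact Or.inr hi
        rw [← hu, Finset.prod_union (Finset.disjoint_left.mpr
          (fun i hi => by simp only [Finset.mem_compl]; exact fun h => h (Finset.mem_sdiff.mp hi).1))]
      rw [Finset.prod_congr rfl hsplit, Finset.prod_mul_distrib, Finset.prod_const]
      congr 1
      -- ∏ B, ∏ i ∈ I \ B, f1 i = Pr ^ (k-1)
      have hin : ∀ B ∈ π.parts, ∏ i ∈ I \ B, f1 i = ∏ i ∈ I, if i ∈ B then 1 else f1 i := by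
        intro B hB
        rw [Finset.sdiff_eq_filter, Finset.prod_filter]
        exact Finset.prod_congr rfl (fun i _ => by by_cases h : i ∈ B <;> simp [h])
      rw [Finset.prod_congr rfl hin, Finset.prod_comm]
      have hiI : ∀ i ∈ I, ∏ B ∈ π.parts, (if i ∈ B then 1 else f1 i) = f1 i ^ (k-1) := by
        intro i hi
        rw [Finset.prod_ite, Finset.prod_const_one, one_mul, Finset.prod_const]
        congr 1
        have huniq : π.parts.filter (fun B => i ∈ B) = {π.part i} := by
          ext B
          simp only [Finset.mem_filter, Finset.mem_singleton]
          constructor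
          · rintro ⟨h1, h2⟩
            exact ((π.existsUnique_mem hi).unique ⟨h1, h2⟩ ⟨π.part_mem.mpr hi, π.mem_part hi⟩)
          · rintro rfl; exact ⟨π.part_mem.mpr hi, π.mem_part hi⟩
        have hcard := Finset.card_filter_add_card_filter_not
          (s := π.parts) (p := fun B => i ∈ B)
        rw [huniq, Finset.card_singleton] at hcard
        omega
      rw [Finset.prod_congr rfl hiI, ← Finset.prod_pow]
    -- assemble
    have hxB : ∀ B ∈ π.parts, x B = (∏ i ∈ B, f2 i) * ∏ i ∈ Bᶜ, f1 i := fun B _ => hx B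
    have e1 : Pr ^ (n - k) * Pr ^ (k - 1) = Pr ^ (n - 1) := by
      rw [← pow_add]; congr 1; omega
    have e2 : Q ^ (n - k) * Q ^ k = Q ^ n := by
      rw [← pow_add]; congr 1; omega
    rw [Finset.prod_congr rfl hxB, Finset.prod_mul_distrib, h2p, h1p, hxe, mul_pow,
      ← e1, ← e2]
    ring
  calc ∑ π ∈ P, (μ π ⊤ : K) * x ∅ ^ (n - π.parts.card) * ∏ B ∈ π.parts, x B
      = ∑ π ∈ P, (μ π ⊤ : K) * (T2 * Pr ^ (n-1) * Q ^ n) := by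
        refine Finset.sum_congr rfl fun π _ => ?_
        rw [mul_assoc, hterm π]
    _ = (((∑ π ∈ P, μ π ⊤ : ℤ) : K)) * (T2 * Pr ^ (n-1) * Q ^ n) := by
        rw [← Finset.sum_mul]; push_cast; ring
    _ = 0 := by rw [hsum]; simp
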